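/- For p dividing m and r dividing m with r = gcd of m and some cycle data, the group G(m/r, m/r, n), viewed inside G(m,1,n) as matrices whose nonzero entries are (m/r)-th roots of unity with product 1, is generated by the set of permutation matrices (i.e., S_n) together with the single reflection [(1 2); r]. -/

import Mathlib

/-- The wreath product `(ℤ/mℤ) ≀ S_n`, i.e. the group `G(m, 1, n)`: an element is a pair
`[u; (a_1, ..., a_n)]` of a permutation `u ∈ S_n` and a weight vector in `(ℤ/mℤ)^n`. -/
structure WP (m n : ℕ) where
  perm : Equiv.Perm (Fin n)
  wt : Fin n → ZMod m

namespace WP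

variable {m n : ℕ}

theorem ext' {g h : WP m n} (h1 : g.perm = h.perm) (h2 : ∀ i, g.wt i = h.wt i) : g = h := by
  cases g; cases h
  simp only [mk.injEq]
  exact ⟨h1, funext h2⟩

instance : Mul (WP m n) :=
  ⟨fun g h => ⟨g.perm * h.perm, fun i => g.wt (h.perm i) + h.wt i⟩⟩

instance : One (WP m n) := ⟨⟨1, fun _ => 0⟩⟩

instance : Inv (WP m n) := ⟨fun g => ⟨g.perm⁻¹, fun i => -g.wt (g.perm⁻¹ i)⟩⟩

instance : Group (WP m n) where
  mul_assoc a b c := ext' (mul_assoc a.perm b.perm c.perm) (fun i => add_assoc _ _ _)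
  one_mul a := ext' (one_mul a.perm) (fun i => zero_add _)
  mul_one a := ext' (mul_one a.perm) (fun i => add_zero _)
  inv_mul_cancel a := ext' (inv_mul_cancel a.perm) (fun i => by
    show -a.wt (a.perm⁻¹ (a.perm i)) + a.wt i = 0
    simp)

end WP

namespace WP

variable {m n : ℕ}

@[simp] theorem mul_perm' (a b : WP m n) : (a * b).perm = a.perm * b.perm := rfl
@[simp] theorem mul_wt' (a b : WP m n) (i : Fin n) : (a * b).wt i = a.wt (b.perm i) + b.wt i := rfl
@[simp] theorem one_perm' : (1 : WP m n).perm = 1 := rfl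
@[simp] theorem one_wt' (i : Fin n) : (1 : WP m n).wt i = 0 := rfl
@[simp] theorem inv_perm' (a : WP m n) : a⁻¹.perm = a.perm⁻¹ := rfl
@[simp] theorem inv_wt' (a : WP m n) (i : Fin n) : a⁻¹.wt i = -a.wt (a.perm⁻¹ i) := rfl

theorem diag_mul (a b : Fin n → ZMod m) :
    (⟨1, a⟩ : WP m n) * ⟨1, b⟩ = ⟨1, a + b⟩ := by
  refine ext' (one_mul 1) fun i => ?_
  show a (((1 : Equiv.Perm (Fin n))) i) + b i = (a + b) i
  simp

theorem diag_inv (a : Fin n → ZMod m) :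
    (⟨1, a⟩ : WP m n)⁻¹ = ⟨1, -a⟩ := by
  refine ext' inv_one fun i => ?_
  show -a (((1 : Equiv.Perm (Fin n))⁻¹) i) = (-a) i
  simp

end WP

/-- Inside `G(m,1,n) = (ℤ/mℤ) ≀ S_n`, the subgroup `G(m/r, m/r, n)` (elements all of whose
weights lie in `rℤ/mℤ` and whose total weight is `0`) is generated by the permutation
matrices (elements of weight zero) together with the single reflection `[(1 2); r]`. -/
theorem closure_perms_and_refl (m n r : ℕ) (hm : 0 < m) (hn : 2 ≤ n) (hr : r ∣ m) :
    ∀ g : WP m n,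
      g ∈ Subgroup.closure
        ({h : WP m n | h.wt = fun _ => 0} ∪
          {(⟨Equiv.swap ⟨0, by omega⟩ ⟨1, by omega⟩,
            fun i => if i = (⟨0, by omega⟩ : Fin n) then (r : ZMod m)
              else if i = (⟨1, by omega⟩ : Fin n) then -(r : ZMod m) else 0⟩ : WP m n)}) ↔
      ((∀ i : Fin n, g.wt i ∈ AddSubgroup.zmultiples ((r : ZMod m))) ∧ ∑ i, g.wt i = 0) := by
  intro g
  set i0 : Fin n := ⟨0, by omega⟩ with hi0
  set i1 : Fin n := ⟨1, by omega⟩ with hi1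
  have h01 : i0 ≠ i1 := by simp [i0, i1, Fin.ext_iff]
  set t : WP m n := ⟨Equiv.swap i0 i1,
    fun i => if i = i0 then (r : ZMod m) else if i = i1 then -(r : ZMod m) else 0⟩ with ht
  set S : Set (WP m n) := {h : WP m n | h.wt = fun _ => 0} ∪ {t} with hS
  set H := Subgroup.closure S with hH
  show g ∈ H ↔ _
  have ht_sum : ∑ i, t.wt i = 0 := by
    have hfe : ∀ i : Fin n, t.wt i =
        (if i = i0 then (r : ZMod m) else 0) + (if i = i1 then -(r : ZMod m) else 0) := by
      intro i
      show (if i = i0 then (r : ZMod m) else if i = i1 then -(r : ZMod m) else 0) = _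
      split_ifs with h1 h2 <;> simp_all
    rw [Finset.sum_congr rfl fun i _ => hfe i, Finset.sum_add_distrib,
      Finset.sum_ite_eq' Finset.univ i0, Finset.sum_ite_eq' Finset.univ i1]
    simp
  constructor
  · intro hg
    induction hg using Subgroup.closure_induction with
    | mem x hx =>
      rcases hx with hx | hx
      · constructor
        · intro i; rw [hx]; exact zero_mem _
        · have hz : ∀ i, x.wt i = 0 := fun i => by rw [hx]
          simp [hz]
      · simp only [Set.mem_singleton_iff] at hx
        subst hx
        refine ⟨fun i => ?_, ht_sum⟩
        show (if i = i0 then (r : ZMod m) else if i = i1 then -(r : ZMod m) else 0) ∈ _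
        split_ifs
        · exact AddSubgroup.mem_zmultiples _
        · exact neg_mem (AddSubgroup.mem_zmultiples _)
        · exact zero_mem _
    | one => exact ⟨fun i => by rw [WP.one_wt']; exact zero_mem _, by simp [WP.one_wt']⟩
    | mul x y hx hy px py =>
      refine ⟨fun i => ?_, ?_⟩
      · rw [WP.mul_wt']; exact add_mem (px.1 _) (py.1 _)
      · simp only [WP.mul_wt']
        rw [Finset.sum_add_distrib, Equiv.sum_comp y.perm x.wt, px.2, py.2, add_zero]
    | inv x hx px =>
      refine ⟨fun i => ?_, ?_⟩
      · rw [WP.inv_wt']; exact neg_mem (px.1 _)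
      · simp only [WP.inv_wt']
        rw [Finset.sum_neg_distrib, Equiv.sum_comp x.perm⁻¹ x.wt, px.2, neg_zero]
  · rintro ⟨hmem, hsum⟩
    -- the additive subgroup of weight vectors whose diagonal element lies in H
    let A : AddSubgroup (Fin n → ZMod m) :=
      { carrier := {w | (⟨1, w⟩ : WP m n) ∈ H}
        zero_mem' := by
          show (⟨1, (0 : Fin n → ZMod m)⟩ : WP m n) ∈ H
          have : (⟨1, (0 : Fin n → ZMod m)⟩ : WP m n) = 1 := rfl
          rw [this]; exact H.one_mem
        add_mem' := by
          intro a b ha hb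
          show (⟨1, a + b⟩ : WP m n) ∈ H
          rw [← WP.diag_mul]; exact H.mul_mem ha hb
        neg_mem' := by
          intro a ha
          show (⟨1, -a⟩ : WP m n) ∈ H
          rw [← WP.diag_inv]; exact H.inv_mem ha }
    have hAmem : ∀ w : Fin n → ZMod m, w ∈ A ↔ (⟨1, w⟩ : WP m n) ∈ H := fun w => Iff.rfl
    have hPmem : ∀ σ : Equiv.Perm (Fin n), (⟨σ, fun _ => 0⟩ : WP m n) ∈ H := by
      intro σ
      exact Subgroup.subset_closure (Or.inl rfl)
    -- base diagonal element
    have htwt : t.wt ∈ A := by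
      rw [hAmem]
      have : (⟨Equiv.swap i0 i1, fun _ => 0⟩ : WP m n) * t = ⟨1, t.wt⟩ := by
        refine WP.ext' ?_ fun i => ?_
        · show Equiv.swap i0 i1 * t.perm = 1
          rw [ht]
          exact Equiv.swap_mul_self i0 i1
        · show (0 : ZMod m) + t.wt i = t.wt i
          simp
      rw [← this]
      exact H.mul_mem (hPmem _) (Subgroup.subset_closure (Or.inr rfl))
    -- conjugation by a permutation
    have hconj : ∀ (σ : Equiv.Perm (Fin n)) (w : Fin n → ZMod m),
        w ∈ A → (fun i => w (σ⁻¹ i)) ∈ A := by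
      intro σ w hw
      rw [hAmem]
      have : (⟨σ, fun _ => 0⟩ : WP m n) * ⟨1, w⟩ * (⟨σ, fun _ => 0⟩ : WP m n)⁻¹ =
          ⟨1, fun i => w (σ⁻¹ i)⟩ := by
        refine WP.ext' ?_ fun i => ?_
        · show σ * 1 * σ⁻¹ = 1
          group
        · show ((0 : ZMod m) + w (((1 : Equiv.Perm (Fin n))) (σ⁻¹ i))) + -(0 : ZMod m) =
            w (σ⁻¹ i)
          simp
      rw [← this]
      exact H.mul_mem (H.mul_mem (hPmem σ) hw) (H.inv_mem (hPmem σ))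
    -- the elementary diagonal elements
    have key : ∀ i j : Fin n, i ≠ j →
        (fun k => if k = i then (r : ZMod m) else if k = j then -(r : ZMod m) else 0) ∈ A := by
      intro i j hij
      obtain ⟨σ, hσ0, hσ1⟩ : ∃ σ : Equiv.Perm (Fin n), σ i0 = i ∧ σ i1 = j := by
        refine ⟨Equiv.swap i0 i * Equiv.swap i1 (Equiv.swap i0 i j), ?_, ?_⟩
        · have hji0 : Equiv.swap i0 i j ≠ i0 := by
            intro h
            have := congrArg (Equiv.swap i0 i) h
            rw [Equiv.swap_apply_self, Equiv.swap_apply_left] at this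
            exact hij this.symm
          rw [Equiv.Perm.mul_apply, Equiv.swap_apply_of_ne_of_ne h01 (Ne.symm hji0),
            Equiv.swap_apply_left]
        · rw [Equiv.Perm.mul_apply, Equiv.swap_apply_left, Equiv.swap_apply_self]
      have := hconj σ t.wt htwt
      have hfun : (fun k => t.wt (σ⁻¹ k)) =
          (fun k => if k = i then (r : ZMod m) else if k = j then -(r : ZMod m) else 0) := by
        funext k
        show (if σ⁻¹ k = i0 then (r : ZMod m) else if σ⁻¹ k = i1 then -(r : ZMod m) else 0) = _
        have e0 : σ⁻¹ k = i0 ↔ k = i := by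
          rw [← hσ0]
          constructor
          · intro h; rw [← h, Equiv.Perm.coe_inv, Equiv.apply_symm_apply]
          · intro h; rw [h, Equiv.Perm.coe_inv, Equiv.symm_apply_apply]
        have e1 : σ⁻¹ k = i1 ↔ k = j := by
          rw [← hσ1]
          constructor
          · intro h; rw [← h, Equiv.Perm.coe_inv, Equiv.apply_symm_apply]
          · intro h; rw [h, Equiv.Perm.coe_inv, Equiv.symm_apply_apply]
        simp only [e0, e1]
      rwa [hfun] at this
    -- decompose the weight vector
    choose k hk using fun i => AddSubgroup.mem_zmultiples_iff.1 (hmem i)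
    have hwA : g.wt ∈ A := by
      have hrepr : g.wt = ∑ i ∈ Finset.univ.erase i0,
          k i • (fun kk => if kk = i then (r : ZMod m) else if kk = i0 then -(r : ZMod m) else 0) := by
        funext j
        rw [Finset.sum_apply]
        simp only [Pi.smul_apply]
        by_cases hj : j = i0
        · subst hj
          have : ∀ i ∈ Finset.univ.erase i0,
              k i • (if i0 = i then (r : ZMod m) else if i0 = i0 then -(r : ZMod m) else 0) =
              -(k i • (r : ZMod m)) := by
            intro i hi
            rw [if_neg (fun h => (Finset.mem_erase.1 hi).1 h.symm), if_pos rfl, smul_neg]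
          rw [Finset.sum_congr rfl this]
          have hsplit : g.wt i0 + ∑ i ∈ Finset.univ.erase i0, g.wt i = ∑ i, g.wt i :=
            Finset.add_sum_erase _ _ (Finset.mem_univ i0)
          rw [hsum] at hsplit
          rw [Finset.sum_neg_distrib, Finset.sum_congr rfl fun i _ => hk i]
          linear_combination hsplit
        · rw [Finset.sum_eq_single j]
          · rw [if_pos rfl, hk j]
          · intro i hi hij
            rw [if_neg (fun h => hij h.symm), if_neg hj, smul_zero]
          · intro h
            exact absurd (Finset.mem_erase.2 ⟨hj, Finset.mem_univ j⟩) h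
      rw [hrepr]
      exact A.sum_mem fun i hi =>
        A.zsmul_mem (key i i0 (Finset.mem_erase.1 hi).1) (k i)
    have : g = (⟨g.perm, fun _ => 0⟩ : WP m n) * ⟨1, g.wt⟩ := by
      refine WP.ext' ?_ fun i => ?_
      · show g.perm = g.perm * 1
        rw [mul_one]
      · show g.wt i = (0 : ZMod m) + g.wt ((1 : Equiv.Perm (Fin n)) i)
        simp
    rw [this]
    exact H.mul_mem (hPmem g.perm) ((hAmem g.wt).1 hwA)
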